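/- The finite-pulse correction factor C_{δ,Δ} = (4/35)·[(Δ+δ)^{7/2} + (Δ−δ)^{7/2} − 2(δ^{7/2} + Δ^{7/2})] / [δ²(Δ − δ/3)] satisfies the asymptotic expansion C_{δ,Δ} = √Δ · (1 + (1/3)(δ/Δ) − (8/35)(δ/Δ)^{3/2} + O((δ/Δ)²)) as δ/Δ → 0. -/

import Mathlib

open Real Filter Topology Asymptotics

lemma rpow_32 (x : ℝ) (hx : 0 < x) : x ^ ((3:ℝ)/2) = x * Real.sqrt x := by
  rw [show (3:ℝ)/2 = 1 + 1/(2:ℝ) by norm_num, Real.rpow_add hx, Real.rpow_one,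
    Real.sqrt_eq_rpow]

lemma rpow_72 (x : ℝ) (hx : 0 < x) : x ^ ((7:ℝ)/2) = x^3 * Real.sqrt x := by
  rw [show (7:ℝ)/2 = ((3:ℕ):ℝ) + 1/(2:ℝ) by norm_num, Real.rpow_add hx,
    Real.rpow_natCast, Real.sqrt_eq_rpow]



lemma aux_nonneg {f f' : ℝ → ℝ} {b : ℝ} (hb : 0 ≤ b)
    (hd : ∀ t ∈ Set.Icc 0 b, HasDerivAt f (f' t) t)
    (h0 : 0 ≤ f 0) (h' : ∀ t ∈ Set.Icc 0 b, 0 ≤ f' t) : 0 ≤ f b := by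
  have hmono : MonotoneOn f (Set.Icc 0 b) := by
    apply monotoneOn_of_deriv_nonneg (convex_Icc 0 b)
    · exact fun t ht => (hd t ht).continuousAt.continuousWithinAt
    · intro t ht
      rw [interior_Icc] at ht
      exact (hd t (Set.Ioo_subset_Icc_self ht)).differentiableAt.differentiableWithinAt
    · intro t ht
      rw [interior_Icc] at ht
      rw [(hd t (Set.Ioo_subset_Icc_self ht)).deriv]
      exact h' t (Set.Ioo_subset_Icc_self ht)
  exact h0.trans (hmono (Set.left_mem_Icc.2 hb) (Set.right_mem_Icc.2 hb) hb)

lemma hd_plus (Δ p t : ℝ) (h : Δ + t ≠ 0) :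
    HasDerivAt (fun s => (Δ + s) ^ p) (p * (Δ + t) ^ (p - 1)) t := by
  have := (Real.hasDerivAt_rpow_const (x := Δ + t) (p := p) (Or.inl h)).comp t
    ((hasDerivAt_id t).const_add Δ)
  simpa [Function.comp_def] using this

lemma hd_minus (Δ p t : ℝ) (h : Δ - t ≠ 0) :
    HasDerivAt (fun s => (Δ - s) ^ p) (-(p * (Δ - t) ^ (p - 1))) t := by
  have := (Real.hasDerivAt_rpow_const (x := Δ - t) (p := p) (Or.inl h)).comp t
    ((hasDerivAt_id t).const_sub Δ)
  simpa [mul_comm, Function.comp_def] using this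

set_option maxHeartbeats 1000000 in
lemma H_bound (Δ : ℝ) (hΔ : 0 < Δ) (δ : ℝ) (hδ0 : 0 ≤ δ) (hδ : δ ≤ Δ/2) :
    0 ≤ (Δ+δ) ^ ((7:ℝ)/2) + (Δ-δ) ^ ((7:ℝ)/2) - 2*Δ ^ ((7:ℝ)/2) - (35/4)*Δ ^ ((3:ℝ)/2)*δ^2 ∧
    (Δ+δ) ^ ((7:ℝ)/2) + (Δ-δ) ^ ((7:ℝ)/2) - 2*Δ ^ ((7:ℝ)/2) - (35/4)*Δ ^ ((3:ℝ)/2)*δ^2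
      ≤ (35/32) * δ^4 / Real.sqrt Δ := by
  have hw0 : 0 < Real.sqrt Δ := Real.sqrt_pos.2 hΔ
  set w : ℝ := Real.sqrt Δ with hw
  set K : ℝ := 105/(4*w) with hK
  set H0 : ℝ → ℝ := fun t => (Δ+t) ^ ((7:ℝ)/2) + (Δ-t) ^ ((7:ℝ)/2)
      - 2*Δ ^ ((7:ℝ)/2) - (35/4)*Δ ^ ((3:ℝ)/2)*t^2 with hH0
  set H1 : ℝ → ℝ := fun t => (7/2)*(Δ+t) ^ ((5:ℝ)/2) - (7/2)*(Δ-t) ^ ((5:ℝ)/2)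
      - (35/2)*Δ ^ ((3:ℝ)/2)*t with hH1
  set H2 : ℝ → ℝ := fun t => (35/4)*(Δ+t) ^ ((3:ℝ)/2) + (35/4)*(Δ-t) ^ ((3:ℝ)/2)
      - (35/2)*Δ ^ ((3:ℝ)/2) with hH2
  set H3 : ℝ → ℝ := fun t => (105/8)*((Δ+t) ^ ((1:ℝ)/2) - (Δ-t) ^ ((1:ℝ)/2)) with hH3
  have hmem : ∀ t ∈ Set.Icc (0:ℝ) δ, 0 < Δ + t ∧ 0 < Δ - t := by
    intro t ht
    constructor
    · linarith [ht.1]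
    · have := ht.2; linarith
  -- bounds on H3
  have h3b : ∀ t ∈ Set.Icc (0:ℝ) δ, 0 ≤ H3 t ∧ H3 t ≤ K * t := by
    intro t ht
    obtain ⟨hp, hm⟩ := hmem t ht
    have hle : Δ - t ≤ Δ + t := by linarith [ht.1]
    have ha2 : Real.sqrt (Δ+t) ^ 2 = Δ + t := Real.sq_sqrt hp.le
    have hb2 : Real.sqrt (Δ-t) ^ 2 = Δ - t := Real.sq_sqrt hm.le
    have hab : Real.sqrt (Δ-t) ≤ Real.sqrt (Δ+t) := Real.sqrt_le_sqrt hle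
    have haw : w ≤ Real.sqrt (Δ+t) := Real.sqrt_le_sqrt (by linarith [ht.1])
    have hb0 : 0 ≤ Real.sqrt (Δ-t) := Real.sqrt_nonneg _
    have key : w * (Real.sqrt (Δ+t) - Real.sqrt (Δ-t)) ≤ 2*t := by
      nlinarith [mul_nonneg (sub_nonneg.2 haw) (sub_nonneg.2 hab),
        mul_nonneg hb0 (sub_nonneg.2 hab)]
    rw [hH3]
    simp only [← Real.sqrt_eq_rpow]
    constructor
    · nlinarith
    · rw [hK, ← mul_le_mul_iff_of_pos_right hw0]
      have hrw : 105/(4*w)*t*w = 105*t/4 := by field_simp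
      rw [hrw]
      nlinarith
  -- derivatives
  have hdH2 : ∀ t ∈ Set.Icc (0:ℝ) δ, HasDerivAt H2 (H3 t) t := by
    intro t ht
    obtain ⟨hp, hm⟩ := hmem t ht
    have e : (3:ℝ)/2 - 1 = 1/2 := by norm_num
    have d1 := hd_plus Δ ((3:ℝ)/2) t hp.ne'
    have d2 := hd_minus Δ ((3:ℝ)/2) t hm.ne'
    rw [e] at d1 d2
    rw [hH2, hH3]
    have := ((d1.const_mul ((35:ℝ)/4)).add (d2.const_mul ((35:ℝ)/4))).sub_const
      ((35/2)*Δ ^ ((3:ℝ)/2))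
    refine this.congr_deriv ?_
    ring
  have hdH1 : ∀ t ∈ Set.Icc (0:ℝ) δ, HasDerivAt H1 (H2 t) t := by
    intro t ht
    obtain ⟨hp, hm⟩ := hmem t ht
    have e : (5:ℝ)/2 - 1 = 3/2 := by norm_num
    have d1 := hd_plus Δ ((5:ℝ)/2) t hp.ne'
    have d2 := hd_minus Δ ((5:ℝ)/2) t hm.ne'
    rw [e] at d1 d2
    have d3 : HasDerivAt (fun s : ℝ => (35/2)*Δ ^ ((3:ℝ)/2)*s) ((35/2)*Δ ^ ((3:ℝ)/2)) t := by
      simpa using (hasDerivAt_id t).const_mul ((35/2)*Δ ^ ((3:ℝ)/2))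
    rw [hH1, hH2]
    have := ((d1.const_mul ((7:ℝ)/2)).sub (d2.const_mul ((7:ℝ)/2))).sub d3
    refine this.congr_deriv ?_
    ring
  have hdH0 : ∀ t ∈ Set.Icc (0:ℝ) δ, HasDerivAt H0 (H1 t) t := by
    intro t ht
    obtain ⟨hp, hm⟩ := hmem t ht
    have e : (7:ℝ)/2 - 1 = 5/2 := by norm_num
    have d1 := hd_plus Δ ((7:ℝ)/2) t hp.ne'
    have d2 := hd_minus Δ ((7:ℝ)/2) t hm.ne'
    rw [e] at d1 d2
    have d3 : HasDerivAt (fun s : ℝ => (35/4)*Δ ^ ((3:ℝ)/2)*s^2)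
        ((35/4)*Δ ^ ((3:ℝ)/2)*(2*t)) t := by
      have := (hasDerivAt_pow 2 t).const_mul ((35/4)*Δ ^ ((3:ℝ)/2))
      refine this.congr_deriv ?_
      ring
    rw [hH0, hH1]
    have := (((d1.add d2).sub_const (2*Δ ^ ((7:ℝ)/2))).sub d3)
    refine this.congr_deriv ?_
    ring
  -- chain
  have c2a : ∀ t ∈ Set.Icc (0:ℝ) δ, 0 ≤ H2 t := by
    intro t ht
    have hsub : Set.Icc (0:ℝ) t ⊆ Set.Icc 0 δ := Set.Icc_subset_Icc_right ht.2
    refine aux_nonneg ht.1 (fun s hs => hdH2 s (hsub hs)) ?_ (fun s hs => (h3b s (hsub hs)).1)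
    rw [hH2]
    simp only [add_zero, sub_zero]
    linarith
  have c2b : ∀ t ∈ Set.Icc (0:ℝ) δ, H2 t ≤ K * t^2/2 := by
    intro t ht
    have hsub : Set.Icc (0:ℝ) t ⊆ Set.Icc 0 δ := Set.Icc_subset_Icc_right ht.2
    have := aux_nonneg (f := fun s => K*s^2/2 - H2 s) (f' := fun s => K*s - H3 s) ht.1
      (fun s hs => by
        have d := ((hasDerivAt_pow 2 s).const_mul K).div_const 2 |>.sub (hdH2 s (hsub hs))
        refine d.congr_deriv ?_
        ring)
      (by
        have h20 : H2 0 = 0 := by rw [hH2]; simp only [add_zero, sub_zero]; ring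
        simp [h20])
      (fun s hs => by simp only [sub_nonneg]; exact (h3b s (hsub hs)).2)
    linarith [this]
  have c1a : ∀ t ∈ Set.Icc (0:ℝ) δ, 0 ≤ H1 t := by
    intro t ht
    have hsub : Set.Icc (0:ℝ) t ⊆ Set.Icc 0 δ := Set.Icc_subset_Icc_right ht.2
    refine aux_nonneg ht.1 (fun s hs => hdH1 s (hsub hs)) ?_ (fun s hs => c2a s (hsub hs))
    rw [hH1]
    simp only [add_zero, sub_zero]
    linarith
  have c1b : ∀ t ∈ Set.Icc (0:ℝ) δ, H1 t ≤ K * t^3/6 := by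
    intro t ht
    have hsub : Set.Icc (0:ℝ) t ⊆ Set.Icc 0 δ := Set.Icc_subset_Icc_right ht.2
    have := aux_nonneg (f := fun s => K*s^3/6 - H1 s) (f' := fun s => K*s^2/2 - H2 s) ht.1
      (fun s hs => by
        have d := ((hasDerivAt_pow 3 s).const_mul K).div_const 6 |>.sub (hdH1 s (hsub hs))
        refine d.congr_deriv ?_
        ring)
      (by
        have h10 : H1 0 = 0 := by rw [hH1]; simp only [add_zero, sub_zero]; ring
        simp [h10])
      (fun s hs => by simp only [sub_nonneg]; exact c2b s (hsub hs))
    linarith [this]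
  have c0a : 0 ≤ H0 δ := by
    refine aux_nonneg hδ0 (fun s hs => hdH0 s hs) ?_ (fun s hs => c1a s hs)
    rw [hH0]
    simp only [add_zero, sub_zero]
    linarith
  have c0b : H0 δ ≤ K * δ^4/24 := by
    have := aux_nonneg (f := fun s => K*s^4/24 - H0 s) (f' := fun s => K*s^3/6 - H1 s) hδ0
      (fun s hs => by
        have d := ((hasDerivAt_pow 4 s).const_mul K).div_const 24 |>.sub (hdH0 s hs)
        refine d.congr_deriv ?_
        ring)
      (by
        have h00 : H0 0 = 0 := by rw [hH0]; simp only [add_zero, sub_zero]; ring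
        simp [h00])
      (fun s hs => by simp only [sub_nonneg]; exact c1b s hs)
    linarith [this]
  have hKval : K * δ^4/24 = (35/32) * δ^4 / w := by
    rw [hK]; field_simp; ring
  have hfin : 0 ≤ H0 δ ∧ H0 δ ≤ (35/32) * δ^4 / w := ⟨c0a, by linarith [c0b, hKval.le]⟩
  rw [hH0] at hfin
  simpa using hfin

set_option maxHeartbeats 1000000 in
lemma pointwise_bound (Δ δ : ℝ) (hΔ : 0 < Δ) (hδ0 : 0 < δ) (hhalf : δ ≤ Δ/2) :
    |(4 / 35) * ((Δ + δ) ^ ((7:ℝ)/2) + (Δ - δ) ^ ((7:ℝ)/2)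
        - 2 * (δ ^ ((7:ℝ)/2) + Δ ^ ((7:ℝ)/2))) / (δ ^ 2 * (Δ - δ / 3))
      - Real.sqrt Δ * (1 + (1/3) * (δ / Δ) - (8/35) * (δ / Δ) ^ ((3:ℝ)/2))|
      ≤ 2 * Real.sqrt Δ * (δ / Δ) ^ 2 := by
  have hw0 : 0 < Real.sqrt Δ := Real.sqrt_pos.2 hΔ
  have hΔδ : δ < Δ := by linarith
  obtain ⟨hHlb, hHub⟩ := H_bound Δ hΔ δ hδ0.le hhalf
  have hsw : Real.sqrt δ ≤ Real.sqrt Δ := Real.sqrt_le_sqrt hΔδ.le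
  have hs0 : 0 < Real.sqrt δ := Real.sqrt_pos.2 hδ0
  rw [rpow_72 δ hδ0, Real.div_rpow hδ0.le hΔ.le, rpow_32 δ hδ0, rpow_32 Δ hΔ, rpow_72 Δ hΔ]
  rw [rpow_72 Δ hΔ, rpow_32 Δ hΔ] at hHub hHlb
  set w := Real.sqrt Δ with hw
  set s := Real.sqrt δ with hs
  set A := (Δ+δ) ^ ((7:ℝ)/2) with hA
  set B := (Δ-δ) ^ ((7:ℝ)/2) with hB
  have hΔw : Δ = w^2 := (Real.sq_sqrt hΔ.le).symm
  have hδs : δ = s^2 := (Real.sq_sqrt hδ0.le).symm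
  have hwne : w ≠ 0 := ne_of_gt hw0
  have hδne : δ ≠ 0 := ne_of_gt hδ0
  have hden0 : 0 < Δ - δ/3 := by linarith
  have hdenne : Δ - δ/3 ≠ 0 := ne_of_gt hden0
  set D := δ ^ 2 * (Δ - δ / 3) with hD
  have hdenpos : 0 < D := by rw [hD]; positivity
  set N := A + B - 2*(Δ^3*w) - 35/4*(Δ*w)*δ^2 with hN
  set X := 4 / 35 * (A + B - 2 * (δ ^ 3 * s + Δ ^ 3 * w)) with hX
  set T := w * (1 + (1/3) * (δ / Δ) - (8/35) * (δ * s / (Δ * w))) with hT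
  -- check the goal now reads |X / D - T| ≤ 2 * w * (δ / Δ) ^ 2
  rw [show X / D - T = (X - T * D) / D from by
    rw [sub_div, mul_div_cancel_right₀ _ (ne_of_gt hdenpos)]]
  have h2 : X - T * D = 4/35*N + δ^4/(9*w) - 8/105*δ^4*s/Δ := by
    rw [hX, hT, hD, hN, hΔw]
    field_simp
    ring
  rw [h2, abs_div, abs_of_pos hdenpos]
  have hposX : (0:ℝ) ≤ δ^4/w := by positivity
  have e9 : δ^4/(9*w) = 1/9*(δ^4/w) := by
    field_simp
  have e35 : 35/32*δ^4/w = 35/32*(δ^4/w) := by ring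
  have h3nonneg : (0:ℝ) ≤ 8/105*δ^4*s/Δ := by positivity
  have h3ub : 8/105*δ^4*s/Δ ≤ 8/105*(δ^4/w) := by
    have step1 : 8/105*δ^4*s/Δ ≤ 8/105*δ^4*w/Δ := by gcongr
    have step2 : 8/105*δ^4*w/Δ = 8/105*(δ^4/w) := by
      rw [hΔw]; field_simp
    linarith
  clear_value w s A B N X T D
  have habs : |4/35*N + δ^4/(9*w) - 8/105*δ^4*s/Δ| ≤ δ^4/w := by
    rw [abs_le]
    constructor
    · rw [e9]
      nlinarith [hHlb, hposX, h3ub]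
    · rw [e9]
      nlinarith [hHub, hposX, h3nonneg, e35]
  calc |4/35*N + δ^4/(9*w) - 8/105*δ^4*s/Δ| / D
      ≤ (δ^4/w) / D := by
        exact (div_le_div_iff_of_pos_right hdenpos).2 habs
    _ = δ^2/(w*(Δ - δ/3)) := by
        rw [hD, div_div, div_eq_div_iff (by positivity) (by positivity)]
        ring
    _ ≤ 2*δ^2/w^3 := by
        rw [div_le_div_iff₀ (by positivity) (by positivity)]
        have hw3' : δ^2*w^3 = δ^2*w*Δ := by rw [hΔw]; ring
        nlinarith [hw3', mul_nonneg (mul_nonneg (sq_nonneg δ) hw0.le)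
          (show (0:ℝ) ≤ Δ - 2*δ/3 by linarith)]
    _ = 2*w*(δ/Δ)^2 := by
        rw [div_pow, hΔw]
        field_simp


/-- Asymptotic expansion of the finite-pulse correction factor `C_{δ,Δ}`:
`C_{δ,Δ} = √Δ (1 + (1/3)(δ/Δ) − (8/35)(δ/Δ)^{3/2} + O((δ/Δ)²))` as `δ/Δ → 0⁺`. -/
theorem sta_correction_expansion (Δ : ℝ) (hΔ : 0 < Δ) :
    (fun δ : ℝ =>
        (4 / 35) * ((Δ + δ) ^ ((7:ℝ)/2) + (Δ - δ) ^ ((7:ℝ)/2)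
            - 2 * (δ ^ ((7:ℝ)/2) + Δ ^ ((7:ℝ)/2))) / (δ ^ 2 * (Δ - δ / 3))
          - Real.sqrt Δ * (1 + (1/3) * (δ / Δ) - (8/35) * (δ / Δ) ^ ((3:ℝ)/2)))
      =O[𝓝[Set.Ioo 0 Δ] 0] fun δ : ℝ => (δ / Δ) ^ 2 := by
  rw [Asymptotics.isBigO_iff]
  refine ⟨2 * Real.sqrt Δ, ?_⟩
  filter_upwards [self_mem_nhdsWithin,
    nhdsWithin_le_nhds (Iio_mem_nhds (by linarith : (0:ℝ) < Δ/2))] with δ hmem hhalf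
  have h := pointwise_bound Δ δ hΔ hmem.1 (le_of_lt hhalf)
  rw [Real.norm_eq_abs, Real.norm_eq_abs,
    abs_of_nonneg (by positivity : (0:ℝ) ≤ (δ/Δ)^2)]
  exact h
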